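/- If Z_1, ..., Z_{n+1} are exchangeable random variables and T is a statistic such that T(Z_1,...,Z_{n+1}) = 1 exactly when Z_{n+1} is strictly larger than all of Z_1,...,Z_n (and 0 otherwise), then the probability that T = 1 is at most 1/(n+1). -/

import Mathlib

open MeasureTheory ProbabilityTheory
open scoped ENNReal

/-- If `Z 0, ..., Z n` (i.e. `n+1` variables) are exchangeable real random variables and
`T` equals `1` exactly when `Z (Fin.last n)` is strictly larger than all the others
(and `0` otherwise), then `P (T = 1) ≤ 1/(n+1)`. -/
theorem stmt0 {Ω : Type*} [MeasurableSpace Ω] (P : Measure Ω) [IsProbabilityMeasure P]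
    (n : ℕ) (Z : Fin (n + 1) → Ω → ℝ) (hZ : ∀ i, Measurable (Z i))
    (hexch : ∀ σ : Equiv.Perm (Fin (n + 1)),
      Measure.map (fun ω => fun i => Z (σ i) ω) P = Measure.map (fun ω => fun i => Z i ω) P)
    (T : Ω → ℝ)
    (hT1 : ∀ ω, T ω = 1 ↔ ∀ i : Fin n, Z i.castSucc ω < Z (Fin.last n) ω)
    (hT0 : ∀ ω, T ω = 1 ∨ T ω = 0) :
    P {ω | T ω = 1} ≤ 1 / (n + 1) := by
  classical
  set g : Ω → (Fin (n + 1) → ℝ) := fun ω i => Z i ω with hg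
  have hgm : Measurable g := measurable_pi_lambda _ hZ
  set μ : Measure (Fin (n + 1) → ℝ) := Measure.map g P with hμ
  have hμprob : IsProbabilityMeasure μ := Measure.isProbabilityMeasure_map hgm.aemeasurable
  set S : Fin (n + 1) → Set (Fin (n + 1) → ℝ) :=
    fun j => {f | ∀ i, i ≠ j → f i < f j} with hS
  have hSm : ∀ j, MeasurableSet (S j) := by
    intro j
    have : S j = ⋂ (i) (_ : i ≠ j), {f : Fin (n + 1) → ℝ | f i < f j} := by
      ext f; simp [hS]
    rw [this]
    exact MeasurableSet.iInter fun i => MeasurableSet.iInter fun _ =>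
      measurableSet_lt (measurable_pi_apply i) (measurable_pi_apply j)
  -- equal measures by exchangeability
  have heq : ∀ j, μ (S j) = μ (S (Fin.last n)) := by
    intro j
    set σ : Equiv.Perm (Fin (n + 1)) := Equiv.swap j (Fin.last n) with hσ
    have key := hexch σ
    have hcomp : (fun ω => fun i => Z (σ i) ω)
        = (fun f : Fin (n + 1) → ℝ => fun i => f (σ i)) ∘ g := rfl
    have hpm : Measurable (fun f : Fin (n + 1) → ℝ => fun i => f (σ i)) :=
      measurable_pi_lambda _ fun i => measurable_pi_apply _
    have h2 : Measure.map (fun f : Fin (n + 1) → ℝ => fun i => f (σ i)) μ = μ := by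
      rw [hμ, Measure.map_map hpm hgm]
      exact key
    have h3 := congrArg (fun m : Measure (Fin (n + 1) → ℝ) => m (S (Fin.last n))) h2
    rw [Measure.map_apply hpm (hSm _)] at h3
    have hσlast : σ (Fin.last n) = j := Equiv.swap_apply_right _ _
    have hpre : (fun f : Fin (n + 1) → ℝ => fun i => f (σ i)) ⁻¹' S (Fin.last n) = S j := by
      ext f
      simp only [Set.mem_preimage, hS, Set.mem_setOf_eq]
      constructor
      · intro h i hi
        have hne : σ.symm i ≠ Fin.last n := by
          intro hc
          apply hi
          have : σ (σ.symm i) = σ (Fin.last n) := by rw [hc]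
          rwa [Equiv.apply_symm_apply, hσlast] at this
        have := h (σ.symm i) hne
        rwa [Equiv.apply_symm_apply, hσlast] at this
      · intro h i hi
        have hne : σ i ≠ j := by
          intro hc
          apply hi
          have : σ i = σ (Fin.last n) := by rw [hc, hσlast]
          exact σ.injective this
        have := h (σ i) hne
        rwa [hσlast]
    rw [hpre] at h3
    exact h3
  -- disjointness
  have hdisj : Pairwise (Function.onFun Disjoint S) := by
    intro j k hjk
    refine Set.disjoint_left.mpr ?_
    intro f hfj hfk
    have h1 : f k < f j := hfj k (Ne.symm hjk)
    have h2 : f j < f k := hfk j hjk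
    exact absurd (h1.trans h2) (lt_irrefl _)
  have hsum : ∑ j : Fin (n + 1), μ (S j) ≤ 1 := by
    rw [← tsum_fintype (L := SummationFilter.unconditional _), ← measure_iUnion hdisj hSm]
    exact prob_le_one
  have hsum2 : (n + 1 : ℝ≥0∞) * μ (S (Fin.last n)) ≤ 1 := by
    calc (n + 1 : ℝ≥0∞) * μ (S (Fin.last n))
        = ∑ _j : Fin (n + 1), μ (S (Fin.last n)) := by
          simp [Finset.sum_const, mul_comm]
      _ = ∑ j : Fin (n + 1), μ (S j) := by
          exact Finset.sum_congr rfl fun j _ => (heq j).symm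
      _ ≤ 1 := hsum
  -- identify the event
  have hset : {ω | T ω = 1} = g ⁻¹' S (Fin.last n) := by
    ext ω
    simp only [Set.mem_setOf_eq, Set.mem_preimage, hT1, hS, Set.mem_setOf_eq, hg]
    constructor
    · intro h i hi
      obtain ⟨i', rfl⟩ := Fin.exists_castSucc_eq.2 hi
      exact h i'
    · intro h i
      exact h i.castSucc (Fin.castSucc_lt_last i).ne
  have hPμ : P {ω | T ω = 1} = μ (S (Fin.last n)) := by
    rw [hset, hμ, Measure.map_apply hgm (hSm _)]
  rw [hPμ]
  rw [ENNReal.le_div_iff_mul_le (Or.inl (by simp)) (Or.inl (by simp))]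
  rw [mul_comm]
  exact hsum2
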